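/- Let v₁, v₂, v₃, v₄, w be five distinct monomials of A whose F-span is a Kummer space, satisfying v₁v₂ = i·v₂v₁, v₁v₃ = i·v₃v₁, v₂v₄ = i·v₄v₂, v₃v₄ = i·v₄v₃, v₁v₄ = −v₄v₁, and v₂v₃ = −v₃v₂. Then either w·v_k = i·v_k·w for all k ∈ {1, 2, 3, 4}, or v_k·w = i·w·v_k for all k ∈ {1, 2, 3, 4}. -/

import Mathlib

/-- A fixed presentation of a tensor product of `n` cyclic algebras of degree 4
over `F`: generators `x k`, `y k` with `(x k)⁴ = αₖ·1`, `(y k)⁴ = βₖ·1`,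
`x k · y k = i · (y k · x k)`, generators with different indices commuting, and the
`x k, y k` generating `A` as an `F`-algebra. -/
structure TensorCyclicPres (F A : Type*) [Field F] [Ring A] [Algebra F A]
    (i : F) (n : ℕ) where
  x : Fin n → A
  y : Fin n → A
  α : Fin n → F
  β : Fin n → F
  α_ne_zero : ∀ k, α k ≠ 0
  β_ne_zero : ∀ k, β k ≠ 0
  x_pow : ∀ k, x k ^ 4 = algebraMap F A (α k)
  y_pow : ∀ k, y k ^ 4 = algebraMap F A (β k)
  xy_rel : ∀ k, x k * y k = i • (y k * x k)
  xx_comm : ∀ k l, k ≠ l → Commute (x k) (x l)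
  yy_comm : ∀ k l, k ≠ l → Commute (y k) (y l)
  xy_comm : ∀ k l, k ≠ l → Commute (x k) (y l)
  generates : Algebra.adjoin F (Set.range x ∪ Set.range y) = ⊤

/-- A monomial with respect to the presentation: an element of the form
`∏ₖ (x k)^{aₖ} (y k)^{bₖ}` with `0 ≤ aₖ, bₖ ≤ 3`. -/
def TensorCyclicPres.IsMonomial {F A : Type*} [Field F] [Ring A] [Algebra F A]
    {i : F} {n : ℕ} (P : TensorCyclicPres F A i n) (v : A) : Prop :=
  ∃ a b : Fin n → Fin 4,
    v = ((List.finRange n).map (fun k => P.x k ^ (a k : ℕ) * P.y k ^ (b k : ℕ))).prod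


set_option linter.unusedSectionVars false
set_option maxHeartbeats 1600000

namespace St11

variable {F A : Type*} [Field F] [CharZero F] [DivisionRing A] [Algebra F A]


variable {F : Type*} [Field F] [CharZero F]

section ScalarI
variable {i : F} (hi : i ^ 2 = -1)

include hi

lemma hi4 : i ^ 4 = 1 := by
  rw [show (4:ℕ) = 2*2 from rfl, pow_mul, hi]; ring

lemma i_ne_zero : i ≠ 0 := by
  intro h; rw [h] at hi; norm_num at hi

lemma ipow_mod (k : ℕ) : i ^ (k % 4) = i ^ k := by
  conv_rhs => rw [← Nat.div_add_mod k 4]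
  rw [pow_add, pow_mul, hi4 hi, one_pow, one_mul]

lemma ipow_table : i^(0:ℕ) = 1 ∧ i^(1:ℕ) = i ∧ i^(2:ℕ) = -1 ∧ i^(3:ℕ) = -i := by
  refine ⟨pow_zero i, pow_one i, hi, ?_⟩
  linear_combination i * hi

lemma ipow_val_inj {s t : ZMod 4} (h : i ^ s.val = i ^ t.val) : s = t := by
  obtain ⟨h0, h1, h2, h3⟩ := ipow_table hi
  have hine := i_ne_zero hi
  have c1 : (1:F) ≠ -1 := by norm_num
  have ci1 : i ≠ 1 := by intro h; rw [h] at hi; norm_num at hi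
  have ci2 : i ≠ -1 := by intro h; rw [h] at hi; norm_num at hi
  have ci3 : i ≠ -i := by
    intro h; apply hine; have : i + i = 0 := by linear_combination h
    have h2 : (2:F) * i = 0 := by ring_nf; linear_combination this
    rcases mul_eq_zero.mp h2 with h|h
    · norm_num at h
    · exact h
  have zc : ∀ z : ZMod 4, z = 0 ∨ z = 1 ∨ z = 2 ∨ z = 3 := by decide
  have hvs := zc s
  have hvt := zc t
  rcases hvs with rfl|rfl|rfl|rfl <;> rcases hvt with rfl|rfl|rfl|rfl <;>
    simp only [show (0:ZMod 4).val = 0 from rfl, show (1:ZMod 4).val = 1 from rfl,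
      show (2:ZMod 4).val = 2 from rfl, show (3:ZMod 4).val = 3 from rfl,
      h0, h1, h2, h3] at h <;> first
    | rfl
    | (exact absurd h (by intro hh; first
        | exact c1 hh
        | exact c1 hh.symm
        | exact ci1 hh.symm
        | exact ci1 (by linear_combination hh)
        | exact ci2 hh
        | exact ci2 hh.symm
        | exact ci3 hh
        | exact ci3 hh.symm
        | exact ci1 (by linear_combination -hh)
        | exact ci2 (by linear_combination -hh)
        | exact ci3 (by linear_combination -hh)
        | exact c1 (by linear_combination hh)
        | exact c1 (by linear_combination -hh)
        | exact c1 (by linear_combination (1 - i) * hh + hi)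
        | exact c1 (by linear_combination -((1 - i) * hh) + hi)
        | exact ci1 (by linear_combination hh)
        | exact ci2 (by linear_combination hh)
        | exact ci3 (by linear_combination hh)))

lemma ipow_natCast_eq (N : ℕ) : i ^ ((N : ZMod 4)).val = i ^ N := by
  rw [ZMod.val_natCast, ipow_mod hi]

lemma ipow_val_add (s t : ZMod 4) : i ^ s.val * i ^ t.val = i ^ ((s+t)).val := by
  rw [← pow_add, ZMod.val_add, ipow_mod hi]

end ScalarI



variable {F A : Type*} [Field F] [CharZero F] [DivisionRing A] [Algebra F A]

section Qcom
variable {i : F} (hi : i ^ 2 = -1)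

lemma smul_cancel {σ τ : F} {X : A} (h : σ • X = τ • X) (hX : X ≠ 0) : σ = τ := by
  have h' : (algebraMap F A σ - algebraMap F A τ) * X = 0 := by
    rw [sub_mul, ← Algebra.smul_def, ← Algebra.smul_def, h, sub_self]
  rcases mul_eq_zero.mp h' with h'' | h''
  · exact (algebraMap F A).injective (sub_eq_zero.mp h'')
  · exact absurd h'' hX

lemma qcom_mul_left {p a b : A} {σ τ : F} (ha : p*a = σ•(a*p)) (hb : p*b = τ•(b*p)) :
    p*(a*b) = (σ*τ)•((a*b)*p) := by
  calc p*(a*b) = (p*a)*b := (mul_assoc _ _ _).symm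
    _ = σ•(a*(p*b)) := by rw [ha, smul_mul_assoc, mul_assoc]
    _ = σ•(a*(τ•(b*p))) := by rw [hb]
    _ = (σ*τ)•((a*b)*p) := by
        rw [mul_smul_comm, smul_smul, mul_assoc]

lemma qcom_swap {p a : A} {s : ℕ} (hi4 : i^4 = 1) (h : p*a = i^s•(a*p)) :
    a*p = i^(3*s)•(p*a) := by
  rw [h, smul_smul, ← pow_add]
  have : (3*s + s) = 4*s := by ring
  rw [this, pow_mul, hi4, one_pow, one_smul]

lemma qcom_pow_right {p a : A} {s : ℕ} (h : p*a = i^s•(a*p)) (m : ℕ) :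
    p*(a^m) = i^(s*m)•((a^m)*p) := by
  induction m with
  | zero => simp
  | succ k ih =>
      rw [pow_succ, qcom_mul_left ih h, ← pow_add, show s*k+s = s*(k+1) by ring]

lemma qcom_list {ι : Type*} (L : List ι) (Q : ι → A) (φ : ι → ℕ) (p : A)
    (h : ∀ k ∈ L, p * Q k = i^(φ k)•(Q k * p)) :
    p * (L.map Q).prod = i^((L.map φ).sum)•((L.map Q).prod * p) := by
  induction L with
  | nil => simp
  | cons a L ih =>
      have hres := ih (fun k hk => h k (List.mem_cons_of_mem a hk))
      have hha := h a List.mem_cons_self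
      simp only [List.map_cons, List.prod_cons, List.sum_cons]
      rw [qcom_mul_left hha hres, ← pow_add]

end Qcom



variable {F A : Type*} [Field F] [CharZero F] [DivisionRing A] [Algebra F A]



section Mono

variable {i : F} {n : ℕ} (P : TensorCyclicPres F A i n)

def PBlk (a b : Fin n → Fin 4) (k : Fin n) : A :=
  P.x k ^ ((a k : ℕ)) * P.y k ^ ((b k : ℕ))

def PMono (a b : Fin n → Fin 4) : A := ((List.finRange n).map (PBlk P a b)).prod

lemma x_ne_zero (k : Fin n) : P.x k ≠ 0 := by
  intro h
  have := P.x_pow k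
  rw [h] at this
  have h0 : algebraMap F A (P.α k) = algebraMap F A 0 := by rw [map_zero]; simpa using this.symm
  exact P.α_ne_zero k ((algebraMap F A).injective h0)

lemma y_ne_zero (k : Fin n) : P.y k ≠ 0 := by
  intro h
  have := P.y_pow k
  rw [h] at this
  have h0 : algebraMap F A (P.β k) = algebraMap F A 0 := by rw [map_zero]; simpa using this.symm
  exact P.β_ne_zero k ((algebraMap F A).injective h0)

lemma blk_ne_zero (a b : Fin n → Fin 4) (k : Fin n) : PBlk P a b k ≠ 0 :=
  mul_ne_zero (pow_ne_zero _ (x_ne_zero P k)) (pow_ne_zero _ (y_ne_zero P k))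

lemma mono_ne_zero (a b : Fin n → Fin 4) : PMono P a b ≠ 0 := by
  unfold PMono
  generalize (List.finRange n) = L
  induction L with
  | nil => simp
  | cons c L ih =>
      simp only [List.map_cons, List.prod_cons]
      exact mul_ne_zero (blk_ne_zero P a b c) ih

variable (hi : i ^ 2 = -1)
include hi

lemma hi4' : i ^ 4 = 1 := by rw [show (4:ℕ) = 2*2 from rfl, pow_mul, hi]; ring

lemma ipow_mod' (k : ℕ) : i ^ (k % 4) = i ^ k := by
  conv_rhs => rw [← Nat.div_add_mod k 4]
  rw [pow_add, pow_mul, hi4' hi, one_pow, one_mul]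

lemma ipow_congr {s t : ℕ} (h : s % 4 = t % 4) : i ^ s = i ^ t := by
  rw [← ipow_mod' hi s, ← ipow_mod' hi t, h]

lemma gen_xy (k : Fin n) : P.x k * P.y k = i^(1:ℕ) • (P.y k * P.x k) := by
  simpa [pow_one] using P.xy_rel k

lemma gen_yx (k : Fin n) : P.y k * P.x k = i^(3:ℕ) • (P.x k * P.y k) := by
  have := qcom_swap (hi4' hi) (gen_xy P hi k)
  simpa using this

lemma xp_yp (k : Fin n) (s t : ℕ) :
    (P.x k)^s * (P.y k)^t = i^(s*t) • ((P.y k)^t * (P.x k)^s) := by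
  have h1 : P.x k * (P.y k)^t = i^(1*t)•((P.y k)^t * P.x k) :=
    qcom_pow_right (gen_xy P hi k) t
  have h2 := qcom_swap (hi4' hi) h1
  have h3 := qcom_pow_right h2 s
  have h4 := qcom_swap (hi4' hi) h3
  rw [h4]
  congr 1
  apply ipow_congr hi
  rw [show 3*(3*(1*t)*s) = s*t + 4*(2*(t*s)) by ring, show s*t = t*s by ring]
  omega

lemma yp_xp (k : Fin n) (s t : ℕ) :
    (P.y k)^s * (P.x k)^t = i^(3*(s*t)) • ((P.x k)^t * (P.y k)^s) := by
  have h1 : P.y k * (P.x k)^t = i^(3*t)•((P.x k)^t * P.y k) :=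
    qcom_pow_right (gen_yx P hi k) t
  have h2 := qcom_swap (hi4' hi) h1
  have h3 := qcom_pow_right h2 s
  have h4 := qcom_swap (hi4' hi) h3
  rw [h4]
  congr 1
  apply ipow_congr hi
  rw [show 3*(3*(3*t)*s) = 3*(s*t) + 4*(6*(t*s)) by ring, show 3*(s*t) = 3*(t*s) by ring]
  omega

lemma blk_qcom_same (a b c d : Fin n → Fin 4) (k : Fin n) :
    PBlk P a b k * PBlk P c d k
    = i^((a k : ℕ)*(d k : ℕ) + 3*((b k : ℕ)*(c k : ℕ))) • (PBlk P c d k * PBlk P a b k) := by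
  set X := P.x k
  set Y := P.y k
  set sa := (a k : ℕ); set sb := (b k : ℕ); set sc := (c k : ℕ); set sd := (d k : ℕ)
  have hbc : Y^sb * X^sc = i^(3*(sb*sc)) • (X^sc * Y^sb) := yp_xp P hi k sb sc
  have had : X^sa * Y^sd = i^(sa*sd) • (Y^sd * X^sa) := xp_yp P hi k sa sd
  show (X^sa * Y^sb) * (X^sc * Y^sd) = _
  calc (X^sa * Y^sb) * (X^sc * Y^sd)
      = X^sa * ((Y^sb * X^sc) * Y^sd) := by rw [mul_assoc, mul_assoc]
    _ = i^(3*(sb*sc)) • (X^sa * ((X^sc * Y^sb) * Y^sd)) := by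
        rw [hbc, smul_mul_assoc, mul_smul_comm]
    _ = i^(3*(sb*sc)) • ((X^sa * X^sc) * (Y^sb * Y^sd)) := by
        rw [mul_assoc, mul_assoc]
    _ = i^(3*(sb*sc)) • ((X^sc * X^sa) * (Y^sd * Y^sb)) := by
        rw [pow_mul_comm X sa sc, pow_mul_comm Y sb sd]
    _ = i^(3*(sb*sc)) • (X^sc * ((X^sa * Y^sd) * Y^sb)) := by
        rw [mul_assoc, mul_assoc]
    _ = (i^(3*(sb*sc)) * i^(sa*sd)) • (X^sc * ((Y^sd * X^sa) * Y^sb)) := by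
        rw [had, smul_mul_assoc, mul_smul_comm, smul_smul]
    _ = (i^(3*(sb*sc)) * i^(sa*sd)) • ((X^sc * Y^sd) * (X^sa * Y^sb)) := by
        rw [mul_assoc, mul_assoc]
    _ = i^(sa*sd + 3*(sb*sc)) • ((X^sc * Y^sd) * (X^sa * Y^sb)) := by
        rw [← pow_add]
        congr 2
        ring

lemma blk_comm_ne (a b c d : Fin n → Fin 4) {k l : Fin n} (hkl : k ≠ l) :
    Commute (PBlk P a b k) (PBlk P c d l) := by
  have hxx := (P.xx_comm k l hkl).pow_pow (a k : ℕ) (c l : ℕ)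
  have hxy := (P.xy_comm k l hkl).pow_pow (a k : ℕ) (d l : ℕ)
  have hyx := ((P.xy_comm l k hkl.symm).symm).pow_pow (b k : ℕ) (c l : ℕ)
  have hyy := (P.yy_comm k l hkl).pow_pow (b k : ℕ) (d l : ℕ)
  exact (hxx.mul_right hxy).mul_left (hyx.mul_right hyy)

lemma mono_qcom_blk (a b c d : Fin n → Fin 4) (l : Fin n) :
    PMono P a b * PBlk P c d l
    = i^((a l : ℕ)*(d l : ℕ) + 3*((b l : ℕ)*(c l : ℕ))) • (PBlk P c d l * PMono P a b) := by
  have key : PBlk P c d l * PMono P a b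
      = i^(((List.finRange n).map
          (fun k => if k = l then (c l : ℕ)*(b l : ℕ) + 3*((d l : ℕ)*(a l : ℕ)) else 0)).sum)
        • (PMono P a b * PBlk P c d l) := by
    apply qcom_list
    intro k _
    by_cases hkl : k = l
    · subst hkl
      simp only [if_pos rfl]
      exact blk_qcom_same P hi c d a b k
    · simp only [if_neg hkl, pow_zero, one_smul]
      exact ((blk_comm_ne P hi a b c d hkl).symm).eq
  have hsum : ((List.finRange n).map
      (fun k => if k = l then (c l : ℕ)*(b l : ℕ) + 3*((d l : ℕ)*(a l : ℕ)) else 0)).sum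
      = (c l : ℕ)*(b l : ℕ) + 3*((d l : ℕ)*(a l : ℕ)) := by
    rw [← Fin.sum_univ_def]
    simp [Finset.sum_ite_eq']
  rw [hsum] at key
  have := qcom_swap (hi4' hi) key
  rw [this]
  congr 1
  apply ipow_congr hi
  rw [show (c l : ℕ)*(b l : ℕ) = (b l : ℕ)*(c l : ℕ) by ring] 
  rw [show (d l : ℕ)*(a l : ℕ) = (a l : ℕ)*(d l : ℕ) by ring]
  rw [show 3*((b l : ℕ)*(c l : ℕ) + 3*((a l : ℕ)*(d l : ℕ)))
      = ((a l : ℕ)*(d l : ℕ) + 3*((b l : ℕ)*(c l : ℕ))) + 4*(2*((a l : ℕ)*(d l : ℕ))) by ring]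
  omega

lemma mono_qcom (a b c d : Fin n → Fin 4) :
    PMono P a b * PMono P c d
    = i^(∑ l : Fin n, ((a l : ℕ)*(d l : ℕ) + 3*((b l : ℕ)*(c l : ℕ))))
      • (PMono P c d * PMono P a b) := by
  have key := qcom_list ((List.finRange n)) (PBlk P c d)
    (fun l => (a l : ℕ)*(d l : ℕ) + 3*((b l : ℕ)*(c l : ℕ))) (PMono P a b)
    (fun l _ => mono_qcom_blk P hi a b c d l)
  rw [Fin.sum_univ_def]
  exact key

end Mono


variable {F A : Type*} [Field F] [CharZero F] [DivisionRing A] [Algebra F A]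

abbrev Vec (n : ℕ) := (Fin n → ZMod 4) × (Fin n → ZMod 4)

def Bv {n : ℕ} (e f : Vec n) : ZMod 4 := ∑ l, (e.1 l * f.2 l - e.2 l * f.1 l)

def vecOf {n : ℕ} (a b : Fin n → Fin 4) : Vec n :=
  (fun l => ((a l : ℕ) : ZMod 4), fun l => ((b l : ℕ) : ZMod 4))

lemma Bv_add_right {n : ℕ} (e f g : Vec n) : Bv e (f + g) = Bv e f + Bv e g := by
  unfold Bv
  rw [← Finset.sum_add_distrib]
  apply Finset.sum_congr rfl
  intro l _
  simp only [Prod.fst_add, Prod.snd_add, Pi.add_apply]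
  ring

lemma Bv_add_left {n : ℕ} (e f g : Vec n) : Bv (e + f) g = Bv e g + Bv f g := by
  unfold Bv
  rw [← Finset.sum_add_distrib]
  apply Finset.sum_congr rfl
  intro l _
  simp only [Prod.fst_add, Prod.snd_add, Pi.add_apply]
  ring

lemma Bv_zero_right {n : ℕ} (e : Vec n) : Bv e 0 = 0 := by
  unfold Bv
  simp

lemma Bv_self {n : ℕ} (e : Vec n) : Bv e e = 0 := by
  unfold Bv
  apply Finset.sum_eq_zero
  intro l _
  ring

lemma Bv_sub_right {n : ℕ} (e f g : Vec n) : Bv e (f - g) = Bv e f - Bv e g := by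
  have h := Bv_add_right e (f - g) g
  rw [sub_add_cancel] at h
  exact (eq_sub_iff_add_eq).mpr h.symm

lemma Bv_cast {n : ℕ} (a b c d : Fin n → Fin 4) :
    ((∑ l : Fin n, ((a l : ℕ)*(d l : ℕ) + 3*((b l : ℕ)*(c l : ℕ))) : ℕ) : ZMod 4)
    = Bv (vecOf a b) (vecOf c d) := by
  rw [Nat.cast_sum]
  apply Finset.sum_congr rfl
  intro l _
  simp only [vecOf]
  push_cast
  rw [show (3 : ZMod 4) = -1 by decide]
  ring

lemma zmod4_cases : ∀ z : ZMod 4, z = 0 ∨ z = 1 ∨ z = 2 ∨ z = 3 := by decide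

lemma zmod4_half' : ∀ z : ZMod 4, z + z = 0 → ∃ g, z = g + g := by decide
lemma zmod4_half {z : ZMod 4} (h : z + z = 0) : ∃ g, z = g + g := zmod4_half' z h

lemma zmod4_four' : ∀ z : ZMod 4, z + z + z + z = 0 := by decide
lemma zmod4_four (z : ZMod 4) : z + z + z + z = 0 := zmod4_four' z

-- halving vectors
lemma vec_half {n : ℕ} {d : Vec n} (h : d + d = 0) : ∃ g : Vec n, d = g + g := by
  have h1 : ∀ l, d.1 l + d.1 l = 0 := fun l => congrFun (congrArg Prod.fst h) l
  have h2 : ∀ l, d.2 l + d.2 l = 0 := fun l => congrFun (congrArg Prod.snd h) l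
  choose g1 hg1 using fun l => zmod4_half (h1 l)
  choose g2 hg2 using fun l => zmod4_half (h2 l)
  exact ⟨(g1, g2), Prod.ext (funext hg1) (funext hg2)⟩

lemma Bv_double_double {n : ℕ} (g h : Vec n) : Bv (g + g) (h + h) = 0 := by
  rw [Bv_add_left, Bv_add_right]
  have := zmod4_four (Bv g h)
  linear_combination this

section withI
variable {i : F} (hi : i ^ 2 = -1)

lemma central_phase {z p : A} {c : F} (hz : z ∈ (⊥ : Subalgebra F A)) (hzne : z ≠ 0)
    (hpne : p ≠ 0) (hc : p * z = c • (z * p)) : c = 1 := by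
  obtain ⟨μ, hμ⟩ := Algebra.mem_bot.mp hz
  have hcomm : p * z = z * p := by rw [← hμ]; exact (Algebra.commutes μ p).symm
  rw [hcomm] at hc
  have h1 : c • (z*p) = (1:F) • (z*p) := by rw [one_smul, ← hc]
  have hX : z * p ≠ 0 := mul_ne_zero hzne hpne
  -- smul_cancel
  have h' : (algebraMap F A c - algebraMap F A 1) * (z*p) = 0 := by
    rw [sub_mul, ← Algebra.smul_def, ← Algebra.smul_def, h1, sub_self]
  rcases mul_eq_zero.mp h' with h'' | h''
  · exact (algebraMap F A).injective (sub_eq_zero.mp h'')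
  · exact absurd h'' hX

end withI

-- Kummer extraction identities
theorem quadExtract (u v w : A) (x y z : F)
    (hvu : v*u = x•(u*v)) (hwu : w*u = y•(u*w)) (hwv : w*v = z•(v*w)) :
    (u+v+w)^4 + (u+(-v)+(-w))^4 - (u+(-v)+w)^4 - (u+v+(-w))^4
    = (4*(1+z+x+x*y+y*z+x*y*z+x^2+x^2*y+x^2*y^2+y^2*z+x*y^2*z+x^2*y^2*z))
        • (u*(u*(v*w)))
      + (4*(1+z+z^2+z^3)) • (v*(v*(v*w)))
      + (4*(1+z+z^2+z^3)) • (v*(w*(w*w))) := by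
  have r1 : ∀ t : A, v*(u*t) = x•(u*(v*t)) := fun t => by
    rw [← mul_assoc, hvu, smul_mul_assoc, mul_assoc]
  have r2 : ∀ t : A, w*(u*t) = y•(u*(w*t)) := fun t => by
    rw [← mul_assoc, hwu, smul_mul_assoc, mul_assoc]
  have r3 : ∀ t : A, w*(v*t) = z•(v*(w*t)) := fun t => by
    rw [← mul_assoc, hwv, smul_mul_assoc, mul_assoc]
  have c4 : ∀ X : A, (4:A)*X = (4:F)•X := fun X => by
    rw [Algebra.smul_def, map_ofNat]
  have expand : (u+v+w)^4 + (u+(-v)+(-w))^4 - (u+(-v)+w)^4 - (u+v+(-w))^4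
      = 4*(u*(u*(v*w))) + 4*(u*(v*(u*w))) + 4*(v*(u*(u*w)))
      + 4*(u*(u*(w*v))) + 4*(u*(w*(u*v))) + 4*(w*(u*(u*v)))
      + 4*(u*(v*(w*u))) + 4*(v*(u*(w*u))) + 4*(u*(w*(v*u)))
      + 4*(w*(u*(v*u))) + 4*(v*(w*(u*u))) + 4*(w*(v*(u*u)))
      + 4*(v*(v*(v*w))) + 4*(v*(v*(w*v))) + 4*(v*(w*(v*v))) + 4*(w*(v*(v*v)))
      + 4*(v*(w*(w*w))) + 4*(w*(v*(w*w))) + 4*(w*(w*(v*w))) + 4*(w*(w*(w*v))) := by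
    noncomm_ring
  rw [expand]
  simp only [r1, r2, r3, hvu, hwu, hwv, mul_smul_comm, smul_mul_assoc, smul_smul, c4]
  match_scalars <;> ring

theorem pairAntiExpand (u v : A) (hvu : v*u = -(u*v)) :
    (u+v)^4 = u^4 + v^4 + 2*(u*(u*(v*v))) := by
  have r1 : ∀ t : A, v*(u*t) = -(u*(v*t)) := fun t => by
    rw [← mul_assoc, hvu, neg_mul, mul_assoc]
  have expand : (u+v)^4
      = u*(u*(u*u)) + u*(u*(u*v)) + u*(u*(v*u)) + u*(v*(u*u))
      + v*(u*(u*u)) + u*(u*(v*v)) + u*(v*(u*v)) + v*(u*(u*v))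
      + u*(v*(v*u)) + v*(u*(v*u)) + v*(v*(u*u)) + u*(v*(v*v))
      + v*(u*(v*v)) + v*(v*(u*v)) + v*(v*(v*u)) + v*(v*(v*v)) := by
    noncomm_ring
  rw [expand]
  simp only [r1, hvu, mul_neg, neg_neg, neg_mul]
  noncomm_ring

theorem pairCommExpand (u v : A) (hvu : v*u = u*v) :
    (u+v)^4 = u^4 + 4*(u*(u*(u*v))) + 6*(u*(u*(v*v))) + 4*(u*(v*(v*v))) + v^4 := by
  have r1 : ∀ t : A, v*(u*t) = u*(v*t) := fun t => by
    rw [← mul_assoc, hvu, mul_assoc]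
  have expand : (u+v)^4
      = u*(u*(u*u)) + u*(u*(u*v)) + u*(u*(v*u)) + u*(v*(u*u))
      + v*(u*(u*u)) + u*(u*(v*v)) + u*(v*(u*v)) + v*(u*(u*v))
      + u*(v*(v*u)) + v*(u*(v*u)) + v*(v*(u*u)) + u*(v*(v*v))
      + v*(u*(v*v)) + v*(v*(u*v)) + v*(v*(v*u)) + v*(v*(v*v)) := by
    noncomm_ring
  rw [expand]
  simp only [r1, hvu]
  noncomm_ring



section Bridge

variable {i : F} {n : ℕ} (P : TensorCyclicPres F A i n) (hi : i ^ 2 = -1)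
include hi

lemma mono_qcom_z (a b c d : Fin n → Fin 4) :
    PMono P a b * PMono P c d
    = i^((Bv (vecOf a b) (vecOf c d)).val) • (PMono P c d * PMono P a b) := by
  rw [mono_qcom P hi a b c d]
  congr 1
  rw [← Bv_cast]
  exact (ipow_natCast_eq hi _).symm

omit hi

lemma list_prod_single {ι : Type*} (f : ι → A) (l : ι) :
    ∀ (L : List ι), l ∈ L → L.Nodup → (∀ k ∈ L, k ≠ l → f k = 1) →
    (L.map f).prod = f l := by
  intro L
  induction L with
  | nil => simp
  | cons a L ih =>
      intro hmem hnd hoth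
      simp only [List.map_cons, List.prod_cons]
      rcases List.mem_cons.mp hmem with rfl | hl
      · have hone : ∀ x ∈ L.map f, x = 1 := by
          intro x hx
          obtain ⟨k, hk, rfl⟩ := List.mem_map.mp hx
          exact hoth k (List.mem_cons_of_mem _ hk)
            (fun h => ((List.nodup_cons.mp hnd).1 (h ▸ hk)))
        rw [List.prod_eq_one hone, mul_one]
      · have hane : a ≠ l := by
          intro h; subst h; exact (List.nodup_cons.mp hnd).1 hl
        rw [hoth a List.mem_cons_self hane, one_mul]
        exact ih hl (List.nodup_cons.mp hnd).2
          (fun k hk hkl => hoth k (List.mem_cons_of_mem _ hk) hkl)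

lemma x_as_mono (l : Fin n) :
    PMono P (fun k => if k = l then 1 else 0) (fun _ => 0) = P.x l := by
  unfold PMono
  have h := list_prod_single (PBlk P (fun k => if k = l then 1 else 0) (fun _ => 0)) l
    (List.finRange n) (List.mem_finRange l) (List.nodup_finRange n) ?_
  · rw [h]
    simp [PBlk]
  · intro k _ hkl
    simp [PBlk, if_neg hkl]

lemma y_as_mono (l : Fin n) :
    PMono P (fun _ => 0) (fun k => if k = l then 1 else 0) = P.y l := by
  unfold PMono
  have h := list_prod_single (PBlk P (fun _ => 0) (fun k => if k = l then 1 else 0)) l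
    (List.finRange n) (List.mem_finRange l) (List.nodup_finRange n) ?_
  · rw [h]
    simp [PBlk]
  · intro k _ hkl
    simp [PBlk, if_neg hkl]

lemma Bv_x (l : Fin n) (f : Vec n) :
    Bv (vecOf (n := n) (fun k => if k = l then 1 else 0) (fun _ => 0)) f = f.2 l := by
  unfold Bv
  have step : ∀ l' ∈ Finset.univ,
      ((vecOf (n := n) (fun k => if k = l then 1 else 0) (fun _ => 0)).1 l' * f.2 l'
       - (vecOf (n := n) (fun k => if k = l then 1 else 0) (fun _ => 0)).2 l' * f.1 l')
      = if l' = l then f.2 l' else 0 := by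
    intro l' _
    by_cases h : l' = l <;> simp [vecOf, h]
  rw [Finset.sum_congr rfl step, Finset.sum_ite_eq' Finset.univ l (fun l' => f.2 l')]
  simp

lemma Bv_y (l : Fin n) (f : Vec n) :
    Bv (vecOf (n := n) (fun _ => 0) (fun k => if k = l then 1 else 0)) f = -(f.1 l) := by
  unfold Bv
  have step : ∀ l' ∈ Finset.univ,
      ((vecOf (n := n) (fun _ => 0) (fun k => if k = l then 1 else 0)).1 l' * f.2 l'
       - (vecOf (n := n) (fun _ => 0) (fun k => if k = l then 1 else 0)).2 l' * f.1 l')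
      = if l' = l then -(f.1 l') else 0 := by
    intro l' _
    by_cases h : l' = l <;> simp [vecOf, h]
  rw [Finset.sum_congr rfl step, Finset.sum_ite_eq' Finset.univ l (fun l' => -(f.1 l'))]
  simp

lemma Bv_anti {n : ℕ} (e f : Vec n) : Bv e f = -(Bv f e) := by
  unfold Bv
  rw [← Finset.sum_neg_distrib]
  apply Finset.sum_congr rfl
  intro l _
  ring

lemma vecOf_inj {n : ℕ} {a b c d : Fin n → Fin 4} (h : vecOf a b = vecOf c d) :
    a = c ∧ b = d := by
  have h1 : ∀ l, ((a l : ℕ) : ZMod 4) = ((c l : ℕ) : ZMod 4) :=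
    fun l => congrFun (congrArg Prod.fst h) l
  have h2 : ∀ l, ((b l : ℕ) : ZMod 4) = ((d l : ℕ) : ZMod 4) :=
    fun l => congrFun (congrArg Prod.snd h) l
  constructor
  · funext l
    apply Fin.ext
    have := congrArg ZMod.val (h1 l)
    rwa [ZMod.val_cast_of_lt (a l).isLt, ZMod.val_cast_of_lt (c l).isLt] at this
  · funext l
    apply Fin.ext
    have := congrArg ZMod.val (h2 l)
    rwa [ZMod.val_cast_of_lt (b l).isLt, ZMod.val_cast_of_lt (d l).isLt] at this

lemma vec_four {n : ℕ} (e : Vec n) : e + e + e + e = 0 := by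
  apply Prod.ext <;> funext l <;>
    simp only [Prod.fst_add, Prod.snd_add, Pi.add_apply, Prod.fst_zero, Prod.snd_zero,
      Pi.zero_apply] <;> exact zmod4_four _

include hi

lemma central_vec (a1 b1 a2 b2 a3 b3 a4 b4 : Fin n → Fin 4)
    (hz : PMono P a1 b1 * (PMono P a2 b2 * (PMono P a3 b3 * PMono P a4 b4))
      ∈ (⊥ : Subalgebra F A)) :
    vecOf a1 b1 + vecOf a2 b2 + vecOf a3 b3 + vecOf a4 b4 = (0 : Vec n) := by
  have hzne : PMono P a1 b1 * (PMono P a2 b2 * (PMono P a3 b3 * PMono P a4 b4)) ≠ 0 :=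
    mul_ne_zero (mono_ne_zero P _ _) (mul_ne_zero (mono_ne_zero P _ _)
      (mul_ne_zero (mono_ne_zero P _ _) (mono_ne_zero P _ _)))
  have key : ∀ (ap bp : Fin n → Fin 4),
      Bv (vecOf ap bp) (vecOf a1 b1 + vecOf a2 b2 + vecOf a3 b3 + vecOf a4 b4) = 0 := by
    intro ap bp
    have q1 := mono_qcom_z P hi ap bp a1 b1
    have q2 := mono_qcom_z P hi ap bp a2 b2
    have q3 := mono_qcom_z P hi ap bp a3 b3
    have q4 := mono_qcom_z P hi ap bp a4 b4
    have hq := qcom_mul_left q1 (qcom_mul_left q2 (qcom_mul_left q3 q4))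
    have hc := central_phase hz hzne (mono_ne_zero P ap bp) hq
    have hcomb : i^((Bv (vecOf ap bp) (vecOf a1 b1)).val)
        * (i^((Bv (vecOf ap bp) (vecOf a2 b2)).val)
          * (i^((Bv (vecOf ap bp) (vecOf a3 b3)).val)
            * i^((Bv (vecOf ap bp) (vecOf a4 b4)).val)))
        = i^((Bv (vecOf ap bp) (vecOf a1 b1) + (Bv (vecOf ap bp) (vecOf a2 b2)
            + (Bv (vecOf ap bp) (vecOf a3 b3) + Bv (vecOf ap bp) (vecOf a4 b4)))).val) := by
      rw [ipow_val_add hi, ipow_val_add hi, ipow_val_add hi]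
    rw [hcomb] at hc
    have h1 : i^((Bv (vecOf ap bp) (vecOf a1 b1) + (Bv (vecOf ap bp) (vecOf a2 b2)
        + (Bv (vecOf ap bp) (vecOf a3 b3) + Bv (vecOf ap bp) (vecOf a4 b4)))).val)
        = i^((0 : ZMod 4)).val := by
      rw [hc]
      norm_num
    have h2 := ipow_val_inj hi h1
    rw [Bv_add_right, Bv_add_right, Bv_add_right]
    linear_combination h2
  have hx : ∀ l, (vecOf a1 b1 + vecOf a2 b2 + vecOf a3 b3 + vecOf a4 b4).2 l = 0 := by
    intro l
    have := key (fun k => if k = l then 1 else 0) (fun _ => 0)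
    rwa [Bv_x] at this
  have hy : ∀ l, (vecOf a1 b1 + vecOf a2 b2 + vecOf a3 b3 + vecOf a4 b4).1 l = 0 := by
    intro l
    have := key (fun _ => 0) (fun k => if k = l then 1 else 0)
    rw [Bv_y] at this
    exact neg_eq_zero.mp this
  apply Prod.ext
  · funext l; exact hy l
  · funext l; exact hx l

omit hi

lemma pairAnti_mem {u v : A} (hvu : v*u = -(u*v))
    (hu : u^4 ∈ (⊥ : Subalgebra F A)) (hv : v^4 ∈ (⊥ : Subalgebra F A))
    (hs : (u+v)^4 ∈ (⊥ : Subalgebra F A)) :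
    u*(u*(v*v)) ∈ (⊥ : Subalgebra F A) := by
  have hid := pairAntiExpand u v hvu
  have c2 : (2:A)*(u*(u*(v*v))) = (2:F)•(u*(u*(v*v))) := by
    rw [Algebra.smul_def, map_ofNat]
  have hkey : (2:F)•(u*(u*(v*v))) = (u+v)^4 - u^4 - v^4 := by
    rw [hid, ← c2]; noncomm_ring
  have hmem : (2:F)•(u*(u*(v*v))) ∈ (⊥ : Subalgebra F A) := by
    rw [hkey]; exact sub_mem (sub_mem hs hu) hv
  have h2 := Subalgebra.smul_mem _ hmem ((2:F)⁻¹)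
  rwa [smul_smul, inv_mul_cancel₀ (two_ne_zero), one_smul] at h2

include hi

lemma pairComm_mem {u v : A} (hvu : v*u = u*v)
    (hm : ∀ c : F, (u + c•v)^4 ∈ (⊥ : Subalgebra F A)) :
    u*(u*(u*v)) ∈ (⊥ : Subalgebra F A) := by
  have hvu' : ∀ c : F, (c•v)*u = u*(c•v) := fun c => by
    rw [smul_mul_assoc, hvu, mul_smul_comm]
  have E : ∀ c : F, (u + c•v)^4
      = u^4 + 4*(u*(u*(u*(c•v)))) + 6*(u*(u*((c•v)*(c•v))))
        + 4*(u*((c•v)*((c•v)*(c•v)))) + (c•v)^4 :=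
    fun c => pairCommExpand u (c•v) (hvu' c)
  have hcombo : (u + (1:F)•v)^4 - i•(u + i•v)^4 - (u + (-1:F)•v)^4 + i•(u + (-i)•v)^4
      ∈ (⊥ : Subalgebra F A) := by
    refine add_mem (sub_mem (sub_mem (hm 1) ?_) (hm (-1))) ?_
    · exact Subalgebra.smul_mem _ (hm i) i
    · exact Subalgebra.smul_mem _ (hm (-i)) i
  have hid : (u + (1:F)•v)^4 - i•(u + i•v)^4 - (u + (-1:F)•v)^4 + i•(u + (-i)•v)^4
      = (16:F)•(u*(u*(u*v))) := by
    rw [E 1, E i, E (-1), E (-i)]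
    have c4 : ∀ X : A, (4:A)*X = (4:F)•X := fun X => by rw [Algebra.smul_def, map_ofNat]
    have c6 : ∀ X : A, (6:A)*X = (6:F)•X := fun X => by rw [Algebra.smul_def, map_ofNat]
    simp only [smul_pow, mul_smul_comm, smul_mul_assoc, smul_smul, c4, c6]
    match_scalars <;>
      first
        | ring1
        | linear_combination (-8:F)*hi
        | linear_combination (-8*(i^2 - 1))*hi
        | linear_combination (8:F)*hi
        | linear_combination (8*(i^2 - 1))*hi
        | linear_combination (4:F)*hi
        | linear_combination (-4:F)*hi
  rw [hid] at hcombo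
  have h2 := Subalgebra.smul_mem _ hcombo ((16:F)⁻¹)
  rwa [smul_smul, inv_mul_cancel₀ (by norm_num), one_smul] at h2

omit hi

lemma triple_mem {u v w : A} {x y z : F}
    (hvu : v*u = x•(u*v)) (hwu : w*u = y•(u*w)) (hwv : w*v = z•(v*w))
    (hζ : 1+z+z^2+z^3 = 0)
    (hΦ : 4*(1+z+x+x*y+y*z+x*y*z+x^2+x^2*y+x^2*y^2+y^2*z+x*y^2*z+x^2*y^2*z) ≠ 0)
    (h1 : (u+v+w)^4 ∈ (⊥ : Subalgebra F A)) (h2 : (u+(-v)+(-w))^4 ∈ (⊥ : Subalgebra F A))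
    (h3 : (u+(-v)+w)^4 ∈ (⊥ : Subalgebra F A)) (h4 : (u+v+(-w))^4 ∈ (⊥ : Subalgebra F A)) :
    u*(u*(v*w)) ∈ (⊥ : Subalgebra F A) := by
  have hE := quadExtract u v w x y z hvu hwu hwv
  rw [hζ] at hE
  have hmem : (u+v+w)^4 + (u+(-v)+(-w))^4 - (u+(-v)+w)^4 - (u+v+(-w))^4
      ∈ (⊥ : Subalgebra F A) := sub_mem (sub_mem (add_mem h1 h2) h3) h4
  rw [hE] at hmem
  simp only [mul_zero, zero_smul, add_zero] at hmem
  have h5 := Subalgebra.smul_mem _ hmem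
    ((4*(1+z+x+x*y+y*z+x*y*z+x^2+x^2*y+x^2*y^2+y^2*z+x*y^2*z+x^2*y^2*z))⁻¹)
  rwa [smul_smul, inv_mul_cancel₀ hΦ, one_smul] at h5

end Bridge

end St11

open St11

/-- If five distinct monomials `v₁, v₂, v₃, v₄, w` span a Kummer space with
`v₁v₂ = i·v₂v₁`, `v₁v₃ = i·v₃v₁`, `v₂v₄ = i·v₄v₂`, `v₃v₄ = i·v₄v₃`,
`v₁v₄ = -v₄v₁`, and `v₂v₃ = -v₃v₂`, then either `w vₖ = i·vₖ w` for all `k`, or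
`vₖ w = i·w vₖ` for all `k`. -/
theorem statement11 {F A : Type*} [Field F] [CharZero F] [DivisionRing A] [Algebra F A]
    (i : F) (hi : i ^ 2 = -1) (n : ℕ) (hn : 1 ≤ n)
    (P : TensorCyclicPres F A i n) (hdim : Module.finrank F A = 16 ^ n)
    (v₁ v₂ v₃ v₄ w : A)
    (h₁ : P.IsMonomial v₁) (h₂ : P.IsMonomial v₂) (h₃ : P.IsMonomial v₃)
    (h₄ : P.IsMonomial v₄) (hw : P.IsMonomial w)
    (hdist : List.Pairwise (· ≠ ·) [v₁, v₂, v₃, v₄, w])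
    (hK : ∀ u ∈ Submodule.span F ({v₁, v₂, v₃, v₄, w} : Set A),
      u ^ 4 ∈ Set.range (algebraMap F A))
    (h12 : v₁ * v₂ = i • (v₂ * v₁)) (h13 : v₁ * v₃ = i • (v₃ * v₁))
    (h24 : v₂ * v₄ = i • (v₄ * v₂)) (h34 : v₃ * v₄ = i • (v₄ * v₃))
    (h14 : v₁ * v₄ = -(v₄ * v₁)) (h23 : v₂ * v₃ = -(v₃ * v₂)) :
    (w * v₁ = i • (v₁ * w) ∧ w * v₂ = i • (v₂ * w) ∧
      w * v₃ = i • (v₃ * w) ∧ w * v₄ = i • (v₄ * w)) ∨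
    (v₁ * w = i • (w * v₁) ∧ v₂ * w = i • (w * v₂) ∧
      v₃ * w = i • (w * v₃) ∧ v₄ * w = i • (w * v₄)) := by
  classical
  obtain ⟨a1, b1, hv1⟩ := h₁
  obtain ⟨a2, b2, hv2⟩ := h₂
  obtain ⟨a3, b3, hv3⟩ := h₃
  obtain ⟨a4, b4, hv4⟩ := h₄
  obtain ⟨aw, bw, hvw⟩ := hw
  have hv1' : v₁ = PMono P a1 b1 := hv1
  have hv2' : v₂ = PMono P a2 b2 := hv2
  have hv3' : v₃ = PMono P a3 b3 := hv3
  have hv4' : v₄ = PMono P a4 b4 := hv4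
  have hvw' : w = PMono P aw bw := hvw
  clear hv1 hv2 hv3 hv4 hvw
  subst hv1' hv2' hv3' hv4' hvw'
  have hi4h : i^4 = 1 := hi4 hi
  have h40 : (4 : ZMod 4) = 0 := by decide
  have h16i : (16:F) - 16*i ≠ 0 := by
    intro h
    have hii : i = 1 := by linear_combination -h/16
    rw [hii] at hi
    norm_num at hi
  obtain ⟨hd1, hdistA⟩ := List.pairwise_cons.mp hdist
  obtain ⟨hd2, hdistB⟩ := List.pairwise_cons.mp hdistA
  obtain ⟨hd3, hdistC⟩ := List.pairwise_cons.mp hdistB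
  obtain ⟨hd4, _⟩ := List.pairwise_cons.mp hdistC
  have hne1w : PMono P a1 b1 ≠ PMono P aw bw := hd1 _ (by simp)
  have hne2w : PMono P a2 b2 ≠ PMono P aw bw := hd2 _ (by simp)
  have hne3w : PMono P a3 b3 ≠ PMono P aw bw := hd3 _ (by simp)
  have hne4w : PMono P a4 b4 ≠ PMono P aw bw := hd4 _ (by simp)
  have hKb : ∀ u ∈ Submodule.span F ({PMono P a1 b1, PMono P a2 b2, PMono P a3 b3, PMono P a4 b4, PMono P aw bw} : Set A), u^4 ∈ (⊥ : Subalgebra F A) :=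
    fun u hu => Algebra.mem_bot.mpr (hK u hu)
  have hsp1 : PMono P a1 b1 ∈ Submodule.span F ({PMono P a1 b1, PMono P a2 b2, PMono P a3 b3, PMono P a4 b4, PMono P aw bw} : Set A) := Submodule.subset_span (by simp)
  have hsp2 : PMono P a2 b2 ∈ Submodule.span F ({PMono P a1 b1, PMono P a2 b2, PMono P a3 b3, PMono P a4 b4, PMono P aw bw} : Set A) := Submodule.subset_span (by simp)
  have hsp3 : PMono P a3 b3 ∈ Submodule.span F ({PMono P a1 b1, PMono P a2 b2, PMono P a3 b3, PMono P a4 b4, PMono P aw bw} : Set A) := Submodule.subset_span (by simp)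
  have hsp4 : PMono P a4 b4 ∈ Submodule.span F ({PMono P a1 b1, PMono P a2 b2, PMono P a3 b3, PMono P a4 b4, PMono P aw bw} : Set A) := Submodule.subset_span (by simp)
  have hspw : PMono P aw bw ∈ Submodule.span F ({PMono P a1 b1, PMono P a2 b2, PMono P a3 b3, PMono P a4 b4, PMono P aw bw} : Set A) := Submodule.subset_span (by simp)
  have swap1' : ∀ {p q : A}, p*q = i^(1:ℕ)•(q*p) → q*p = (i^(3:ℕ))•(p*q) := by
    intro p q h
    have h2 := qcom_swap hi4h h
    rwa [show 3*1 = 3 from rfl] at h2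
  have swap3' : ∀ {p q : A}, p*q = i^(3:ℕ)•(q*p) → q*p = i•(p*q) := by
    intro p q h
    have h2 := qcom_swap hi4h h
    rw [show 3*3 = 9 from rfl, ← ipow_mod hi 9] at h2
    rwa [show (9:ℕ)%4 = 1 from rfl, pow_one] at h2
  have getB : ∀ (a b c d : Fin n → Fin 4) (t : ZMod 4),
      PMono P a b * PMono P c d = i^(t.val) • (PMono P c d * PMono P a b) →
      Bv (vecOf a b) (vecOf c d) = t := by
    intro a b c d t hrel
    have h0 := mono_qcom_z P hi a b c d
    have h1 : i^((Bv (vecOf a b) (vecOf c d)).val) • (PMono P c d * PMono P a b)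
        = i^(t.val) • (PMono P c d * PMono P a b) := by rw [← h0, hrel]
    exact ipow_val_inj hi
      (smul_cancel h1 (mul_ne_zero (mono_ne_zero P c d) (mono_ne_zero P a b)))
  have hB12 : Bv (vecOf a1 b1) (vecOf a2 b2) = 1 :=
    getB a1 b1 a2 b2 1 (by rw [show ((1:ZMod 4)).val = 1 by decide, pow_one]; exact h12)
  have hB13 : Bv (vecOf a1 b1) (vecOf a3 b3) = 1 :=
    getB a1 b1 a3 b3 1 (by rw [show ((1:ZMod 4)).val = 1 by decide, pow_one]; exact h13)
  have hB24 : Bv (vecOf a2 b2) (vecOf a4 b4) = 1 :=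
    getB a2 b2 a4 b4 1 (by rw [show ((1:ZMod 4)).val = 1 by decide, pow_one]; exact h24)
  have hB34 : Bv (vecOf a3 b3) (vecOf a4 b4) = 1 :=
    getB a3 b3 a4 b4 1 (by rw [show ((1:ZMod 4)).val = 1 by decide, pow_one]; exact h34)
  have hB14 : Bv (vecOf a1 b1) (vecOf a4 b4) = 2 :=
    getB a1 b1 a4 b4 2 (by rw [show ((2:ZMod 4)).val = 2 by decide, hi, neg_one_smul]; exact h14)
  have hB23 : Bv (vecOf a2 b2) (vecOf a3 b3) = 2 :=
    getB a2 b2 a3 b3 2 (by rw [show ((2:ZMod 4)).val = 2 by decide, hi, neg_one_smul]; exact h23)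
  have tripleH : ∀ (aU bU aV bV aW bW : Fin n → Fin 4) (x y z : F),
      PMono P aU bU ∈ Submodule.span F ({PMono P a1 b1, PMono P a2 b2, PMono P a3 b3, PMono P a4 b4, PMono P aw bw} : Set A) →
      PMono P aV bV ∈ Submodule.span F ({PMono P a1 b1, PMono P a2 b2, PMono P a3 b3, PMono P a4 b4, PMono P aw bw} : Set A) →
      PMono P aW bW ∈ Submodule.span F ({PMono P a1 b1, PMono P a2 b2, PMono P a3 b3, PMono P a4 b4, PMono P aw bw} : Set A) →
      PMono P aV bV * PMono P aU bU = x • (PMono P aU bU * PMono P aV bV) →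
      PMono P aW bW * PMono P aU bU = y • (PMono P aU bU * PMono P aW bW) →
      PMono P aW bW * PMono P aV bV = z • (PMono P aV bV * PMono P aW bW) →
      1+z+z^2+z^3 = 0 →
      4*(1+z+x+x*y+y*z+x*y*z+x^2+x^2*y+x^2*y^2+y^2*z+x*y^2*z+x^2*y^2*z) ≠ 0 →
      vecOf aU bU + vecOf aU bU + vecOf aV bV + vecOf aW bW = 0 := by
    intro aU bU aV bV aW bW x y z hU hV hW hx hy hz hζ hΦ
    apply central_vec P hi
    apply triple_mem hx hy hz hζ hΦ
    · exact hKb _ (add_mem (add_mem hU hV) hW)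
    · exact hKb _ (add_mem (add_mem hU (neg_mem hV)) (neg_mem hW))
    · exact hKb _ (add_mem (add_mem hU (neg_mem hV)) hW)
    · exact hKb _ (add_mem (add_mem hU hV) (neg_mem hW))
  have ruleZero : ∀ (ak bk : Fin n → Fin 4), PMono P ak bk ∈ Submodule.span F ({PMono P a1 b1, PMono P a2 b2, PMono P a3 b3, PMono P a4 b4, PMono P aw bw} : Set A) →
      PMono P ak bk ≠ PMono P aw bw →
      Bv (vecOf aw bw) (vecOf ak bk) ≠ 0 := by
    intro ak bk hmemk hnek h0
    have hq := mono_qcom_z P hi aw bw ak bk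
    rw [h0, show ((0:ZMod 4)).val = 0 by decide, pow_zero, one_smul] at hq
    have hX3 : PMono P aw bw * (PMono P aw bw * (PMono P aw bw * PMono P ak bk))
        ∈ (⊥ : Subalgebra F A) := by
      apply pairComm_mem hi hq.symm
      intro c
      exact hKb _ (add_mem hspw (Submodule.smul_mem _ c hmemk))
    have hvec := central_vec P hi aw bw aw bw aw bw ak bk hX3
    have h4v := vec_four (vecOf aw bw)
    have hcan : vecOf aw bw + vecOf aw bw + vecOf aw bw + vecOf ak bk
        = vecOf aw bw + vecOf aw bw + vecOf aw bw + vecOf aw bw := by rw [hvec, h4v]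
    obtain ⟨ha, hb⟩ := vecOf_inj (add_left_cancel hcan)
    exact hnek (by rw [ha, hb])
  have h12n : PMono P a1 b1 * PMono P a2 b2 = i^(1:ℕ)•(PMono P a2 b2 * PMono P a1 b1) := by
    rw [pow_one]; exact h12
  have h13n : PMono P a1 b1 * PMono P a3 b3 = i^(1:ℕ)•(PMono P a3 b3 * PMono P a1 b1) := by
    rw [pow_one]; exact h13
  have h24n : PMono P a2 b2 * PMono P a4 b4 = i^(1:ℕ)•(PMono P a4 b4 * PMono P a2 b2) := by
    rw [pow_one]; exact h24
  have h34n : PMono P a3 b3 * PMono P a4 b4 = i^(1:ℕ)•(PMono P a4 b4 * PMono P a3 b3) := by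
    rw [pow_one]; exact h34
  have z12 := swap1' h12n
  have z13 := swap1' h13n
  have y24 := swap1' h24n
  have z34 := swap1' h34n
  have z14 : PMono P a4 b4 * PMono P a1 b1 = (-1:F)•(PMono P a1 b1 * PMono P a4 b4) := by
    rw [neg_one_smul, h14, neg_neg]
  have hU2a : vecOf a2 b2 + vecOf a2 b2 + vecOf a1 b1 + vecOf a4 b4 = 0 :=
    tripleH a2 b2 a1 b1 a4 b4 i (i^3) (-1) hsp2 hsp1 hsp4 h12 y24 z14 (by norm_num) (fun heq => (mul_ne_zero (by norm_num : (16:F) ≠ 0) (i_ne_zero hi)) (by linear_combination heq - (-12*i + 4*i^2 + 8*i^3 - 4*i^4 - 4*i^5)*hi))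
  have hU2b : vecOf a3 b3 + vecOf a3 b3 + vecOf a1 b1 + vecOf a4 b4 = 0 :=
    tripleH a3 b3 a1 b1 a4 b4 i (i^3) (-1) hsp3 hsp1 hsp4 h13 z34 z14 (by norm_num) (fun heq => (mul_ne_zero (by norm_num : (16:F) ≠ 0) (i_ne_zero hi)) (by linear_combination heq - (-12*i + 4*i^2 + 8*i^3 - 4*i^4 - 4*i^5)*hi))
  have pairBv : ∀ (g : Vec n) {X Y Z W : Vec n}, X+Y+Z+W = 0 →
      Bv g X + Bv g Y + Bv g Z + Bv g W = 0 := by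
    intro g X Y Z W h
    have hh := congrArg (Bv g) h
    rwa [Bv_add_right, Bv_add_right, Bv_add_right, Bv_zero_right] at hh
  have pa := pairBv (vecOf aw bw) hU2a
  have pb := pairBv (vecOf aw bw) hU2b
  have hpar : Bv (vecOf aw bw) (vecOf a2 b2) + Bv (vecOf aw bw) (vecOf a2 b2)
      = Bv (vecOf aw bw) (vecOf a3 b3) + Bv (vecOf aw bw) (vecOf a3 b3) := by
    linear_combination pa - pb
  have halfContra : vecOf aw bw + vecOf aw bw + vecOf a1 b1 + vecOf a4 b4 = 0 →
      Bv (vecOf aw bw) (vecOf a2 b2) = 2 → Bv (vecOf aw bw) (vecOf a3 b3) = 2 → False := by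
    intro hvecW hc2 hc3
    have hd1 : (vecOf aw bw - vecOf a2 b2) + (vecOf aw bw - vecOf a2 b2) = 0 := by
      have heq : (vecOf aw bw - vecOf a2 b2) + (vecOf aw bw - vecOf a2 b2)
          = (vecOf aw bw + vecOf aw bw + vecOf a1 b1 + vecOf a4 b4)
            - (vecOf a2 b2 + vecOf a2 b2 + vecOf a1 b1 + vecOf a4 b4) := by abel
      rw [heq, hvecW, hU2a, sub_zero]
    have hd2 : (vecOf a3 b3 - vecOf a2 b2) + (vecOf a3 b3 - vecOf a2 b2) = 0 := by
      have heq : (vecOf a3 b3 - vecOf a2 b2) + (vecOf a3 b3 - vecOf a2 b2)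
          = (vecOf a3 b3 + vecOf a3 b3 + vecOf a1 b1 + vecOf a4 b4)
            - (vecOf a2 b2 + vecOf a2 b2 + vecOf a1 b1 + vecOf a4 b4) := by abel
      rw [heq, hU2b, hU2a, sub_zero]
    obtain ⟨g, hg⟩ := vec_half hd1
    obtain ⟨g', hg'⟩ := vec_half hd2
    have hdd : Bv (vecOf aw bw - vecOf a2 b2) (vecOf a3 b3 - vecOf a2 b2) = 0 := by
      rw [hg, hg']; exact Bv_double_double g g'
    have hfin : Bv (vecOf aw bw) (vecOf a3 b3) - Bv (vecOf aw bw) (vecOf a2 b2) = 2 := by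
      rw [← Bv_sub_right]
      have hs : Bv (vecOf aw bw) (vecOf a3 b3 - vecOf a2 b2)
          = Bv (vecOf a2 b2) (vecOf a3 b3 - vecOf a2 b2)
            + Bv (vecOf aw bw - vecOf a2 b2) (vecOf a3 b3 - vecOf a2 b2) := by
        rw [← Bv_add_left]
        congr 1
        abel
      rw [hs, hdd, add_zero, Bv_sub_right, Bv_self, hB23, sub_zero]
    rw [hc3, hc2] at hfin
    revert hfin
    decide
  rcases zmod4_cases (Bv (vecOf aw bw) (vecOf a2 b2)) with hc2|hc2|hc2|hc2
  · exact absurd hc2 (ruleZero a2 b2 hsp2 hne2w)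
  · -- m2 = 1
    have hs14 : Bv (vecOf aw bw) (vecOf a1 b1) + Bv (vecOf aw bw) (vecOf a4 b4) = 2 := by
      rw [hc2] at pa
      first
      | linear_combination pa
      | linear_combination pa - h40
      | linear_combination pa + h40
      | linear_combination pa - 2*h40
      | linear_combination pa + 2*h40
    rcases zmod4_cases (Bv (vecOf aw bw) (vecOf a1 b1)) with hc1|hc1|hc1|hc1
    · exact absurd hc1 (ruleZero a1 b1 hsp1 hne1w)
    · -- m1 = 1 ⇒ m4 = 1
      have hc4 : Bv (vecOf aw bw) (vecOf a4 b4) = 1 := by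
        rw [hc1] at hs14
        first
        | linear_combination hs14
        | linear_combination hs14 - h40
        | linear_combination hs14 + h40
        | linear_combination hs14 - 2*h40
        | linear_combination hs14 + 2*h40
      rcases zmod4_cases (Bv (vecOf aw bw) (vecOf a3 b3)) with hc3|hc3|hc3|hc3
      · exact absurd hc3 (ruleZero a3 b3 hsp3 hne3w)
      · -- all = 1 : left branch
        left
        refine ⟨?_, ?_, ?_, ?_⟩
        · have hwr := mono_qcom_z P hi aw bw a1 b1
          rw [hc1, show ((1:ZMod 4)).val = 1 by decide, pow_one] at hwr
          exact hwr
        · have hwr := mono_qcom_z P hi aw bw a2 b2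
          rw [hc2, show ((1:ZMod 4)).val = 1 by decide, pow_one] at hwr
          exact hwr
        · have hwr := mono_qcom_z P hi aw bw a3 b3
          rw [hc3, show ((1:ZMod 4)).val = 1 by decide, pow_one] at hwr
          exact hwr
        · have hwr := mono_qcom_z P hi aw bw a4 b4
          rw [hc4, show ((1:ZMod 4)).val = 1 by decide, pow_one] at hwr
          exact hwr
      · -- m3 = 2 : parity contradiction
        rw [hc2, hc3] at hpar
        exact absurd hpar (by decide)
      · -- m3 = 3 : triple (w; v1, v3)
        have hw1r := mono_qcom_z P hi aw bw a1 b1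
        rw [hc1, show ((1:ZMod 4)).val = 1 by decide] at hw1r
        have x1 := swap1' hw1r
        have hw3r := mono_qcom_z P hi aw bw a3 b3
        rw [hc3, show ((3:ZMod 4)).val = 3 by decide] at hw3r
        have y3 := swap3' hw3r
        have hvec := tripleH aw bw a1 b1 a3 b3 (i^3) i (i^3) hspw hsp1 hsp3 x1 y3 z13
          (by linear_combination (1 - i^2 + i^3 + i^4 - i^5 + i^7)*hi) (fun heq => h16i (by linear_combination heq - (-12 + 16*i + 12*i^2 - 8*i^3 - 4*i^4 + 12*i^5 + 8*i^6 - 4*i^7 + 4*i^9)*hi))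
        have hcon := pairBv (vecOf a2 b2) hvec
        rw [Bv_anti (vecOf a2 b2) (vecOf aw bw), hc2,
          Bv_anti (vecOf a2 b2) (vecOf a1 b1), hB12, hB23] at hcon
        exact absurd hcon (by decide)
    · -- m1 = 2 ⇒ m4 = 0 : excluded
      have hc4 : Bv (vecOf aw bw) (vecOf a4 b4) = 0 := by
        rw [hc1] at hs14
        first
        | linear_combination hs14
        | linear_combination hs14 - h40
        | linear_combination hs14 + h40
        | linear_combination hs14 - 2*h40
        | linear_combination hs14 + 2*h40
      exact absurd hc4 (ruleZero a4 b4 hsp4 hne4w)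
    · -- m1 = 3 ⇒ m4 = 3 : triple (w; v2, v4)
      have hc4 : Bv (vecOf aw bw) (vecOf a4 b4) = 3 := by
        rw [hc1] at hs14
        first
        | linear_combination hs14
        | linear_combination hs14 - h40
        | linear_combination hs14 + h40
        | linear_combination hs14 - 2*h40
        | linear_combination hs14 + 2*h40
      have hw2r := mono_qcom_z P hi aw bw a2 b2
      rw [hc2, show ((1:ZMod 4)).val = 1 by decide] at hw2r
      have x2 := swap1' hw2r
      have hw4r := mono_qcom_z P hi aw bw a4 b4
      rw [hc4, show ((3:ZMod 4)).val = 3 by decide] at hw4r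
      have y4 := swap3' hw4r
      have hvec := tripleH aw bw a2 b2 a4 b4 (i^3) i (i^3) hspw hsp2 hsp4 x2 y4 y24
        (by linear_combination (1 - i^2 + i^3 + i^4 - i^5 + i^7)*hi) (fun heq => h16i (by linear_combination heq - (-12 + 16*i + 12*i^2 - 8*i^3 - 4*i^4 + 12*i^5 + 8*i^6 - 4*i^7 + 4*i^9)*hi))
      have hcon := pairBv (vecOf a3 b3) hvec
      rw [Bv_anti (vecOf a3 b3) (vecOf aw bw),
        Bv_anti (vecOf a3 b3) (vecOf a2 b2), hB23, hB34] at hcon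
      rcases zmod4_cases (Bv (vecOf aw bw) (vecOf a3 b3)) with h|h|h|h <;>
        rw [h] at hcon <;> exact absurd hcon (by decide)
  · -- m2 = 2
    have hs14 : Bv (vecOf aw bw) (vecOf a1 b1) + Bv (vecOf aw bw) (vecOf a4 b4) = 0 := by
      rw [hc2] at pa
      first
      | linear_combination pa
      | linear_combination pa - h40
      | linear_combination pa + h40
      | linear_combination pa - 2*h40
      | linear_combination pa + 2*h40
    rcases zmod4_cases (Bv (vecOf aw bw) (vecOf a3 b3)) with hc3|hc3|hc3|hc3
    · exact absurd hc3 (ruleZero a3 b3 hsp3 hne3w)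
    · rw [hc2, hc3] at hpar
      exact absurd hpar (by decide)
    · -- m3 = 2
      rcases zmod4_cases (Bv (vecOf aw bw) (vecOf a1 b1)) with hc1|hc1|hc1|hc1
      · exact absurd hc1 (ruleZero a1 b1 hsp1 hne1w)
      · -- m1 = 1 ⇒ m4 = 3 : triple (w; v1, v4), ΦC
        have hc4 : Bv (vecOf aw bw) (vecOf a4 b4) = 3 := by
          rw [hc1] at hs14
          first
        | linear_combination hs14
        | linear_combination hs14 - h40
        | linear_combination hs14 + h40
        | linear_combination hs14 - 2*h40
        | linear_combination hs14 + 2*h40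
        have hw1r := mono_qcom_z P hi aw bw a1 b1
        rw [hc1, show ((1:ZMod 4)).val = 1 by decide] at hw1r
        have x1 := swap1' hw1r
        have hw4r := mono_qcom_z P hi aw bw a4 b4
        rw [hc4, show ((3:ZMod 4)).val = 3 by decide] at hw4r
        have y4 := swap3' hw4r
        have hvec := tripleH aw bw a1 b1 a4 b4 (i^3) i (-1) hspw hsp1 hsp4 x1 y4 z14
          (by norm_num) (fun heq => (neg_ne_zero.mpr (mul_ne_zero (by norm_num : (16:F) ≠ 0) (i_ne_zero hi))) (by linear_combination heq - (12*i - 4*i^2 - 8*i^3 + 4*i^4 + 4*i^5)*hi))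
        exact (halfContra hvec hc2 hc3).elim
      · -- m1 = 2 ⇒ m4 = 2 : anticommuting pairs
        have mkE : ∀ (ak bk : Fin n → Fin 4), PMono P ak bk ∈ Submodule.span F ({PMono P a1 b1, PMono P a2 b2, PMono P a3 b3, PMono P a4 b4, PMono P aw bw} : Set A) →
            Bv (vecOf aw bw) (vecOf ak bk) = 2 →
            vecOf aw bw + vecOf aw bw + vecOf ak bk + vecOf ak bk = 0 := by
          intro ak bk hmemk hck
          have hwr := mono_qcom_z P hi aw bw ak bk
          rw [hck, show ((2:ZMod 4)).val = 2 by decide, hi, neg_one_smul] at hwr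
          have hanti : PMono P ak bk * PMono P aw bw = -(PMono P aw bw * PMono P ak bk) := by
            rw [hwr, neg_neg]
          apply central_vec P hi
          exact pairAnti_mem hanti (hKb _ hspw) (hKb _ hmemk) (hKb _ (add_mem hspw hmemk))
        have hE1 := mkE a1 b1 hsp1 hc1
        have hE2 := mkE a2 b2 hsp2 hc2
        have hcan : vecOf aw bw + vecOf aw bw + (vecOf a1 b1 + vecOf a1 b1)
            = vecOf aw bw + vecOf aw bw + (vecOf a2 b2 + vecOf a2 b2) := by
          have r1 : vecOf aw bw + vecOf aw bw + (vecOf a1 b1 + vecOf a1 b1)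
              = vecOf aw bw + vecOf aw bw + vecOf a1 b1 + vecOf a1 b1 := by abel
          have r2 : vecOf aw bw + vecOf aw bw + (vecOf a2 b2 + vecOf a2 b2)
              = vecOf aw bw + vecOf aw bw + vecOf a2 b2 + vecOf a2 b2 := by abel
          rw [r1, r2, hE1, hE2]
        have h1122 := add_left_cancel hcan
        have hq2 : Bv (vecOf a1 b1 + vecOf a1 b1) (vecOf a4 b4)
            = Bv (vecOf a2 b2 + vecOf a2 b2) (vecOf a4 b4) := by rw [h1122]
        rw [Bv_add_left, Bv_add_left, hB14, hB24] at hq2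
        exact absurd hq2 (by decide)
      · -- m1 = 3 ⇒ m4 = 1 : triple (w; v1, v4), ΦA
        have hc4 : Bv (vecOf aw bw) (vecOf a4 b4) = 1 := by
          rw [hc1] at hs14
          first
        | linear_combination hs14
        | linear_combination hs14 - h40
        | linear_combination hs14 + h40
        | linear_combination hs14 - 2*h40
        | linear_combination hs14 + 2*h40
        have hw1r := mono_qcom_z P hi aw bw a1 b1
        rw [hc1, show ((3:ZMod 4)).val = 3 by decide] at hw1r
        have x1 := swap3' hw1r
        have hw4r := mono_qcom_z P hi aw bw a4 b4
        rw [hc4, show ((1:ZMod 4)).val = 1 by decide] at hw4r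
        have y4 := swap1' hw4r
        have hvec := tripleH aw bw a1 b1 a4 b4 i (i^3) (-1) hspw hsp1 hsp4 x1 y4 z14
          (by norm_num) (fun heq => (mul_ne_zero (by norm_num : (16:F) ≠ 0) (i_ne_zero hi)) (by linear_combination heq - (-12*i + 4*i^2 + 8*i^3 - 4*i^4 - 4*i^5)*hi))
        exact (halfContra hvec hc2 hc3).elim
    · rw [hc2, hc3] at hpar
      exact absurd hpar (by decide)
  · -- m2 = 3
    have hs14 : Bv (vecOf aw bw) (vecOf a1 b1) + Bv (vecOf aw bw) (vecOf a4 b4) = 2 := by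
      rw [hc2] at pa
      first
      | linear_combination pa
      | linear_combination pa - h40
      | linear_combination pa + h40
      | linear_combination pa - 2*h40
      | linear_combination pa + 2*h40
    rcases zmod4_cases (Bv (vecOf aw bw) (vecOf a1 b1)) with hc1|hc1|hc1|hc1
    · exact absurd hc1 (ruleZero a1 b1 hsp1 hne1w)
    · -- m1 = 1 : triple (w; v1, v2)
      have hw1r := mono_qcom_z P hi aw bw a1 b1
      rw [hc1, show ((1:ZMod 4)).val = 1 by decide] at hw1r
      have x1 := swap1' hw1r
      have hw2r := mono_qcom_z P hi aw bw a2 b2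
      rw [hc2, show ((3:ZMod 4)).val = 3 by decide] at hw2r
      have y2 := swap3' hw2r
      have hvec := tripleH aw bw a1 b1 a2 b2 (i^3) i (i^3) hspw hsp1 hsp2 x1 y2 z12
        (by linear_combination (1 - i^2 + i^3 + i^4 - i^5 + i^7)*hi) (fun heq => h16i (by linear_combination heq - (-12 + 16*i + 12*i^2 - 8*i^3 - 4*i^4 + 12*i^5 + 8*i^6 - 4*i^7 + 4*i^9)*hi))
      have hcon := pairBv (vecOf a3 b3) hvec
      rw [Bv_anti (vecOf a3 b3) (vecOf aw bw),
        Bv_anti (vecOf a3 b3) (vecOf a1 b1), hB13,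
        Bv_anti (vecOf a3 b3) (vecOf a2 b2), hB23] at hcon
      rcases zmod4_cases (Bv (vecOf aw bw) (vecOf a3 b3)) with h|h|h|h <;>
        rw [h] at hcon <;> exact absurd hcon (by decide)
    · -- m1 = 2 ⇒ m4 = 0 : excluded
      have hc4 : Bv (vecOf aw bw) (vecOf a4 b4) = 0 := by
        rw [hc1] at hs14
        first
        | linear_combination hs14
        | linear_combination hs14 - h40
        | linear_combination hs14 + h40
        | linear_combination hs14 - 2*h40
        | linear_combination hs14 + 2*h40
      exact absurd hc4 (ruleZero a4 b4 hsp4 hne4w)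
    · -- m1 = 3 ⇒ m4 = 3
      have hc4 : Bv (vecOf aw bw) (vecOf a4 b4) = 3 := by
        rw [hc1] at hs14
        first
        | linear_combination hs14
        | linear_combination hs14 - h40
        | linear_combination hs14 + h40
        | linear_combination hs14 - 2*h40
        | linear_combination hs14 + 2*h40
      rcases zmod4_cases (Bv (vecOf aw bw) (vecOf a3 b3)) with hc3|hc3|hc3|hc3
      · exact absurd hc3 (ruleZero a3 b3 hsp3 hne3w)
      · -- m3 = 1 : triple (w; v3, v4)
        have hw3r := mono_qcom_z P hi aw bw a3 b3
        rw [hc3, show ((1:ZMod 4)).val = 1 by decide] at hw3r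
        have x3 := swap1' hw3r
        have hw4r := mono_qcom_z P hi aw bw a4 b4
        rw [hc4, show ((3:ZMod 4)).val = 3 by decide] at hw4r
        have y4 := swap3' hw4r
        have hvec := tripleH aw bw a3 b3 a4 b4 (i^3) i (i^3) hspw hsp3 hsp4 x3 y4 z34
          (by linear_combination (1 - i^2 + i^3 + i^4 - i^5 + i^7)*hi) (fun heq => h16i (by linear_combination heq - (-12 + 16*i + 12*i^2 - 8*i^3 - 4*i^4 + 12*i^5 + 8*i^6 - 4*i^7 + 4*i^9)*hi))
        have hcon := pairBv (vecOf a2 b2) hvec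
        rw [Bv_anti (vecOf a2 b2) (vecOf aw bw), hc2, hB23, hB24] at hcon
        exact absurd hcon (by decide)
      · -- m3 = 2 : parity
        rw [hc2, hc3] at hpar
        exact absurd hpar (by decide)
      · -- all = 3 : right branch
        right
        refine ⟨?_, ?_, ?_, ?_⟩
        · have hwr := mono_qcom_z P hi aw bw a1 b1
          rw [hc1, show ((3:ZMod 4)).val = 3 by decide] at hwr
          exact swap3' hwr
        · have hwr := mono_qcom_z P hi aw bw a2 b2
          rw [hc2, show ((3:ZMod 4)).val = 3 by decide] at hwr
          exact swap3' hwr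
        · have hwr := mono_qcom_z P hi aw bw a3 b3
          rw [hc3, show ((3:ZMod 4)).val = 3 by decide] at hwr
          exact swap3' hwr
        · have hwr := mono_qcom_z P hi aw bw a4 b4
          rw [hc4, show ((3:ZMod 4)).val = 3 by decide] at hwr
          exact swap3' hwr
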